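/- Let g₁, …, g_N be real numbers with ḡ_k := (g₁ + ⋯ + g_k)/k. In the symmetric-collision case (q_k^± = 1/2), the vector −R^{-1}μ, where R is the (N−1)×(N−1) tridiagonal matrix with 1 on the diagonal and −1/2 on the super- and sub-diagonals, and μ = (g₂−g₁, g₃−g₂, …, g_N−g_{N−1})ᵀ, equals 2(g₁ − ḡ_N, g₁+g₂ − 2ḡ_N, …, g₁+⋯+g_{N−1} − (N−1)ḡ_N)ᵀ. Consequently, −R^{-1}μ > 0 componentwise if and only if ḡ_k > ḡ_N for all k = 1, …, N−1. -/

import Mathlib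

open Finset Matrix


noncomputable def mmAux (N k j : ℤ) : ℝ :=
  2 * ((min k j : ℤ) + 1) * ((N : ℝ) - 1 - ((max k j : ℤ) : ℝ)) / N

lemma mm_key (N k j : ℤ) (hN : 2 ≤ N) (hk0 : 0 ≤ k) (hk : k ≤ N - 2)
    (hj0 : 0 ≤ j) (hj : j ≤ N - 2) :
    mmAux N k j - (mmAux N (k-1) j + mmAux N (k+1) j) / 2 = if k = j then 1 else 0 := by
  have hN0 : (N : ℝ) ≠ 0 := by exact_mod_cast (by omega : N ≠ 0)
  simp only [mmAux]
  rcases lt_trichotomy k j with h | h | h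
  · rw [if_neg (by omega)]
    rw [show min k j = k by omega, show min (k-1) j = k - 1 by omega,
      show min (k+1) j = k + 1 by omega, show max k j = j by omega,
      show max (k-1) j = j by omega, show max (k+1) j = j by omega]
    push_cast
    field_simp
    ring
  · subst h
    rw [if_pos rfl]
    rw [show min k k = k by omega, show min (k-1) k = k - 1 by omega,
      show min (k+1) k = k by omega, show max k k = k by omega,
      show max (k-1) k = k by omega, show max (k+1) k = k + 1 by omega]
    push_cast
    field_simp
    ring
  · rw [if_neg (by omega)]
    rw [show min k j = j by omega, show min (k-1) j = j by omega,
      show min (k+1) j = j by omega, show max k j = k by omega,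
      show max (k-1) j = k - 1 by omega, show max (k+1) j = k + 1 by omega]
    push_cast
    field_simp
    ring

lemma tridiag_sum {n : ℕ} (R : Matrix (Fin n) (Fin n) ℝ)
    (hR : ∀ i j : Fin n, R i j =
      if i = j then 1 else if (j : ℕ) = i + 1 ∨ (i : ℕ) = j + 1 then -(1 / 2) else 0)
    (W : ℤ → ℝ) (hW0 : W (-1) = 0) (hWn : W n = 0) (i : Fin n) :
    ∑ k, R i k * W k =
      W i - (W ((i : ℤ) - 1) + W ((i : ℤ) + 1)) / 2 := by
  have hsplit : ∀ k : Fin n, R i k * W k =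
      (if k = i then W (k : ℤ) else 0) +
      (if (k : ℕ) = (i : ℕ) + 1 then -(1/2) * W (k : ℤ) else 0) +
      (if (i : ℕ) = (k : ℕ) + 1 then -(1/2) * W (k : ℤ) else 0) := by
    intro k
    rw [hR i k]
    by_cases h1 : i = k
    · subst h1
      rw [if_pos rfl, if_pos rfl]
      simp
    · have h1' : ¬ k = i := fun h => h1 h.symm
      by_cases h2 : (k : ℕ) = (i : ℕ) + 1
      · rw [if_neg h1, if_pos (Or.inl h2), if_neg h1', if_pos h2,
          if_neg (by omega)]
        ring
      · by_cases h3 : (i : ℕ) = (k : ℕ) + 1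
        · rw [if_neg h1, if_pos (Or.inr h3), if_neg h1', if_neg h2, if_pos h3]
          ring
        · rw [if_neg h1, if_neg (by tauto), if_neg h1', if_neg h2, if_neg h3]
          ring
  rw [Finset.sum_congr rfl (fun k _ => hsplit k), Finset.sum_add_distrib,
    Finset.sum_add_distrib]
  have s1 : (∑ k : Fin n, if k = i then W (k : ℤ) else 0) = W (i : ℤ) := by
    simp [Finset.sum_ite_eq']
  have s2 : (∑ k : Fin n, if (k : ℕ) = (i : ℕ) + 1 then -(1/2) * W (k : ℤ) else 0)
      = -(1/2) * W ((i : ℤ) + 1) := by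
    by_cases h : (i : ℕ) + 1 < n
    · rw [Finset.sum_eq_single (⟨(i : ℕ) + 1, h⟩ : Fin n)
        (fun b _ hb => if_neg (fun hc => hb (Fin.ext (by simpa using hc))))
        (fun hb => absurd (Finset.mem_univ _) hb)]
      have harg : ((((⟨(i : ℕ) + 1, h⟩ : Fin n) : ℕ)) : ℤ) = (i : ℤ) + 1 := by
        simp
      rw [if_pos rfl, harg]
    · have hin : (i : ℕ) + 1 = n := by have := i.isLt; omega
      have hz : W ((i : ℤ) + 1) = 0 := by
        rw [show (i : ℤ) + 1 = (n : ℤ) by omega]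
        exact hWn
      rw [hz, Finset.sum_eq_zero (fun k _ => if_neg (by have := k.isLt; omega))]
      ring
  have s3 : (∑ k : Fin n, if (i : ℕ) = (k : ℕ) + 1 then -(1/2) * W (k : ℤ) else 0)
      = -(1/2) * W ((i : ℤ) - 1) := by
    by_cases h : 0 < (i : ℕ)
    · have hlt : (i : ℕ) - 1 < n := by have := i.isLt; omega
      rw [Finset.sum_eq_single (⟨(i : ℕ) - 1, hlt⟩ : Fin n)
        (fun b _ hb => if_neg (fun hc => hb (Fin.ext (by simp; omega))))
        (fun hb => absurd (Finset.mem_univ _) hb)]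
      have harg : ((((⟨(i : ℕ) - 1, hlt⟩ : Fin n) : ℕ)) : ℤ) = (i : ℤ) - 1 := by
        simp; omega
      rw [if_pos (by simp; omega), harg]
    · have hi0 : (i : ℕ) = 0 := by omega
      have hz : W ((i : ℤ) - 1) = 0 := by
        rw [show (i : ℤ) - 1 = -1 by omega]
        exact hW0
      rw [hz, Finset.sum_eq_zero (fun k _ => if_neg (by omega))]
      ring
  rw [s1, s2, s3]; ring

/-- Symmetric collisions: with `R` the `(N−1)×(N−1)` tridiagonal matrix with `1` on the
diagonal and `−1/2` on the super- and sub-diagonals, and `μ_k = g_{k+1} − g_k`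
(here `g : ℕ → ℝ`, `0`-indexed, so `g 0, …, g (N-1)` are the `N` drifts and
`ḡ_k = (g 0 + ⋯ + g (k-1))/k`), one has
`−R⁻¹μ = 2 (g₁ − ḡ_N, g₁+g₂ − 2ḡ_N, …, g₁+⋯+g_{N−1} − (N−1)ḡ_N)ᵀ`; consequently
`−R⁻¹μ > 0` componentwise iff `ḡ_k > ḡ_N` for all `k = 1, …, N−1`. -/
theorem stmt_15 (N : ℕ) (hN : 2 ≤ N) (g : ℕ → ℝ)
    (R : Matrix (Fin (N - 1)) (Fin (N - 1)) ℝ)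
    (hR : ∀ i j : Fin (N - 1), R i j =
      if i = j then 1 else if (j : ℕ) = i + 1 ∨ (i : ℕ) = j + 1 then -(1 / 2) else 0)
    (μ : Fin (N - 1) → ℝ) (hμ : ∀ i : Fin (N - 1), μ i = g (i + 1) - g i)
    (gbar : ℕ → ℝ) (hgbar : ∀ k : ℕ, gbar k = (∑ j ∈ range k, g j) / k) :
    (∀ i : Fin (N - 1),
      (-(R⁻¹ *ᵥ μ)) i = 2 * ((∑ j ∈ range (i + 1), g j) - (i + 1) * gbar N)) ∧
    ((∀ i : Fin (N - 1), 0 < (-(R⁻¹ *ᵥ μ)) i) ↔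
      ∀ k : ℕ, 1 ≤ k → k ≤ N - 1 → gbar N < gbar k) := by
  have hNR : (N : ℝ) ≠ 0 := Nat.cast_ne_zero.mpr (by omega)
  set M : Matrix (Fin (N - 1)) (Fin (N - 1)) ℝ :=
    fun i j => mmAux N i j with hM
  have hRM : R * M = 1 := by
    ext i j
    have hjlt : (j : ℕ) < N - 1 := j.isLt
    have h0 : mmAux N (-1) ((j : ℕ) : ℤ) = 0 := by
      simp [mmAux, show min (-1) (((j : ℕ) : ℤ)) = -1 by omega]
    have hn0 : mmAux N ((N - 1 : ℕ) : ℤ) ((j : ℕ) : ℤ) = 0 := by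
      rw [mmAux, show max (((N - 1 : ℕ) : ℤ)) (((j : ℕ) : ℤ)) = ((N - 1 : ℕ) : ℤ) by omega]
      push_cast [Nat.cast_sub (by omega : 1 ≤ N)]
      ring
    rw [Matrix.mul_apply]
    rw [tridiag_sum R hR (fun k => mmAux N k ((j : ℕ) : ℤ)) h0 hn0 i]
    rw [mm_key N ((i : ℕ) : ℤ) ((j : ℕ) : ℤ) (by omega) (by omega)
      (by have := i.isLt; omega) (by omega) (by have := j.isLt; omega)]
    rw [Matrix.one_apply]
    by_cases h : i = j
    · rw [if_pos (by exact_mod_cast congrArg (fun x : Fin (N-1) => ((x : ℕ) : ℤ)) h), if_pos h]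
    · rw [if_neg (fun hc => h (Fin.ext (by exact_mod_cast hc))), if_neg h]
  have hMR : M * R = 1 := mul_eq_one_comm.mp hRM
  have hinv : R⁻¹ = M := inv_eq_right_inv hRM
  set W : ℤ → ℝ := fun k => 2 * ((∑ j ∈ range (k + 1).toNat, g j) - ((k : ℝ) + 1) * gbar N)
    with hW
  have hW0 : W (-1) = 0 := by simp [hW]
  have hWN : W ((N - 1 : ℕ) : ℤ) = 0 := by
    have h1 : (((N - 1 : ℕ) : ℤ) + 1).toNat = N := by omega
    have h2 : ((((N - 1 : ℕ) : ℤ)) : ℝ) + 1 = (N : ℝ) := by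
      push_cast [Nat.cast_sub (by omega : 1 ≤ N)]; ring
    simp only [hW, h1, h2, hgbar N]
    field_simp
    ring
  set v : Fin (N - 1) → ℝ :=
    fun i => 2 * ((∑ j ∈ range (i + 1), g j) - (i + 1) * gbar N) with hv
  have hWv : ∀ i : Fin (N - 1), W ((i : ℕ) : ℤ) = v i := by
    intro i
    simp only [hW, hv]
    have h1 : (((i : ℕ) : ℤ) + 1).toNat = (i : ℕ) + 1 := by omega
    rw [h1]
    push_cast
    ring
  have hsum : ∀ i : Fin (N - 1), (R *ᵥ v) i = -(μ i) := by
    intro i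
    have hilt : (i : ℕ) < N - 1 := i.isLt
    rw [Matrix.mulVec, dotProduct]
    rw [Finset.sum_congr rfl (fun k _ => by rw [← hWv k])]
    rw [tridiag_sum R hR W hW0 hWN i]
    rw [hμ i]; simp only [hW]
    have h1 : (((i : ℕ) : ℤ) + 1).toNat = (i : ℕ) + 1 := by omega
    have h2 : (((i : ℕ) : ℤ) - 1 + 1).toNat = (i : ℕ) := by omega
    have h3 : (((i : ℕ) : ℤ) + 1 + 1).toNat = (i : ℕ) + 1 + 1 := by omega
    simp only [h1, h2, h3]
    rw [Finset.sum_range_succ ((fun j => g j)) ((i : ℕ) + 1), Finset.sum_range_succ g (i : ℕ)]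
    push_cast
    ring
  have hμv : μ = -(R *ᵥ v) := by
    funext i
    rw [Pi.neg_apply, hsum i, neg_neg]
  have hfinal : -(R⁻¹ *ᵥ μ) = v := by
    rw [hinv, hμv, Matrix.mulVec_neg, Matrix.mulVec_mulVec, hMR, Matrix.one_mulVec, neg_neg]
  constructor
  · intro i; rw [hfinal]
  · rw [hfinal]
    have hbr : ∀ k : ℕ, 1 ≤ k →
        (gbar N < gbar k ↔ 0 < 2 * ((∑ j ∈ range k, g j) - k * gbar N)) := by
      intro k hk
      rw [hgbar k]
      have hk0 : (0 : ℝ) < k := by exact_mod_cast hk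
      rw [lt_div_iff₀ hk0]
      constructor <;> intro hlt <;> nlinarith
    constructor
    · intro h k hk1 hk2
      have hklt : k - 1 < N - 1 := by omega
      have := h ⟨k - 1, hklt⟩
      simp only [hv] at this
      rw [hbr k hk1]
      rw [show k - 1 + 1 = k by omega] at this
      rw [show ((k - 1 : ℕ) : ℝ) + 1 = (k : ℝ) by push_cast [Nat.cast_sub hk1]; ring] at this
      exact this
    · intro h i
      simp only [hv]
      have hk1 : 1 ≤ (i : ℕ) + 1 := by omega
      have := h ((i : ℕ) + 1) hk1 (by have := i.isLt; omega)
      rw [hbr _ hk1] at this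
      push_cast at this ⊢
      convert this using 4
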